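/- For all q ∈ [0,1], 1 - q²(q+2)/((q+1)(q+4)) - q·log(2/(q+4)) ≤ ((q+4)/(q+2))^q. -/

import Mathlib

open Real Set

lemma padeF (f f' : ℝ → ℝ)
    (hder : ∀ z, 1 ≤ z → HasDerivAt f (f' z) z)
    (hpos : ∀ z, 1 ≤ z → 0 ≤ f' z)
    (hone : f 1 = 0) {y : ℝ} (hy : 1 ≤ y) : 0 ≤ f y := by
  have hmono : MonotoneOn f (Ici 1) := by
    apply monotoneOn_of_deriv_nonneg (convex_Ici 1)
    · exact ContinuousOn.congr (continuousOn_of_forall_continuousAt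
        (fun z hz => (hder z hz).continuousAt)) (fun z hz => rfl)
    · intro z hz
      rw [interior_Ici] at hz
      exact (hder z hz.le).differentiableAt.differentiableWithinAt
    · intro z hz
      rw [interior_Ici] at hz
      rw [(hder z hz.le).deriv]
      exact hpos z hz.le
  have := hmono (self_mem_Ici) (mem_Ici.mpr hy) hy
  linarith [hone ▸ this]

lemma logA {y : ℝ} (hy : 1 ≤ y) : Real.log y ≤ y/2 - 1/(2*y) := by
  have h := padeF (fun t => t/2 - 1/(2*t) - Real.log t)
    (fun t => 1/2 + 1/(2*t^2) - 1/t) ?_ ?_ ?_ hy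
  · simpa using h
  · intro z hz
    have hz0 : z ≠ 0 := by positivity
    have hd1 : HasDerivAt (fun t : ℝ => t/2) (1/2) z := by
      simpa using (hasDerivAt_id z).div_const 2
    have hd2 : HasDerivAt (fun t : ℝ => 1/(2*t)) (-(1/(2*z^2))) z := by
      have h0 := (hasDerivAt_inv hz0).div_const 2
      have heq : (fun t : ℝ => 1/(2*t)) = fun t : ℝ => t⁻¹/2 := by
        funext t
        rw [one_div, mul_inv, div_eq_mul_inv, mul_comm]
      rw [heq]
      refine h0.congr_deriv ?_
      ring
    have hd3 : HasDerivAt Real.log (1/z) z := by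
      simpa [one_div] using Real.hasDerivAt_log hz0
    have := (hd1.sub hd2).sub hd3
    refine this.congr_deriv ?_
    show 1/2 - -(1/(2*z^2)) - 1/z = _
    ring
  · intro z hz
    have h : 1/2 + 1/(2*z^2) - 1/z = (z-1)^2/(2*z^2) := by field_simp; ring
    rw [h]; positivity
  · norm_num

lemma logB {y : ℝ} (hy : 1 ≤ y) : 2*(y-1)/(y+1) ≤ Real.log y := by
  have h := padeF (fun t => Real.log t - 2*(t-1)/(t+1))
    (fun t => 1/t - 4/(t+1)^2) ?_ ?_ ?_ hy
  · simpa using h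
  · intro z hz
    have hz0 : z ≠ 0 := by positivity
    have hz1 : z + 1 ≠ 0 := by positivity
    have hd3 : HasDerivAt Real.log (1/z) z := by
      simpa [one_div] using Real.hasDerivAt_log hz0
    have hd2 : HasDerivAt (fun t : ℝ => 2*(t-1)/(t+1)) (4/(z+1)^2) z := by
      have hn : HasDerivAt (fun t : ℝ => 2*(t-1)) 2 z := by
        simpa using (((hasDerivAt_id z).sub_const 1).const_mul 2)
      have hdd : HasDerivAt (fun t : ℝ => t+1) 1 z := by
        simpa using (hasDerivAt_id z).add_const 1
      have := hn.div hdd hz1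
      refine this.congr_deriv ?_
      field_simp
      ring
    exact (hd3.sub hd2).congr_deriv (by simp only)
  · intro z hz
    have h : 1/z - 4/(z+1)^2 = (z-1)^2/(z*(z+1)^2) := by
      field_simp; ring
    rw [h]
    have : (0:ℝ) < z := by linarith
    positivity
  · norm_num

theorem technical_ineq_2 (q : ℝ) (hq : q ∈ Set.Icc (0:ℝ) 1) :
    1 - q ^ 2 * (q + 2) / ((q + 1) * (q + 4)) - q * Real.log (2 / (q + 4)) ≤
      ((q + 4) / (q + 2)) ^ q := by
  obtain ⟨hq0, hq1⟩ := hq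
  have h1 : (0:ℝ) < q + 1 := by linarith
  have h2 : (0:ℝ) < q + 2 := by linarith
  have h3 : (0:ℝ) < q + 3 := by linarith
  have h4 : (0:ℝ) < q + 4 := by linarith
  set a : ℝ := (q + 4) / (q + 2) with ha
  have hapos : 0 < a := by positivity
  have ha1 : 1 ≤ a := (one_le_div h2).mpr (by linarith)
  set L : ℝ := Real.log a with hL
  have hL0 : 0 ≤ L := Real.log_nonneg ha1
  -- rpow to exp
  have hrw : a ^ q = Real.exp (q * L) := by
    rw [Real.rpow_def_of_pos hapos, mul_comm]
  rw [hrw]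
  have hexp : 1 + q * L + (q * L) ^ 2 / 2 ≤ Real.exp (q * L) :=
    Real.quadratic_le_exp_of_nonneg (by positivity)
  -- rewrite log(2/(q+4)) = - log((q+4)/2)
  have hlog2 : Real.log (2 / (q + 4)) = - Real.log ((q + 4) / 2) := by
    rw [← Real.log_inv]
    congr 1
    field_simp
  rw [hlog2]
  -- split log((q+4)/2) = log((q+2)/2) + L
  have hsplit : Real.log ((q + 4) / 2) = Real.log ((q + 2) / 2) + L := by
    rw [hL, ha, ← Real.log_mul (by positivity) (by positivity)]
    congr 1
    field_simp
  -- upper bound for log((q+2)/2)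
  have hyge : (1:ℝ) ≤ (q + 2) / 2 := by
    rw [le_div_iff₀ (by norm_num : (0:ℝ) < 2)]; linarith
  have hUB : Real.log ((q + 2) / 2) ≤ (q + 2) / 4 - 1 / (q + 2) := by
    have := logA (y := (q + 2) / 2) (by linarith)
    have e1 : ((q+2)/2)/2 - 1/(2*((q+2)/2)) = (q + 2) / 4 - 1 / (q + 2) := by
      field_simp
      ring
    linarith [e1 ▸ this]
  -- lower bound for L
  have hLB : 2 / (q + 3) ≤ L := by
    have := logB (y := a) ha1
    have e2 : 2 * (a - 1) / (a + 1) = 2 / (q + 3) := by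
      rw [ha]
      rw [div_eq_div_iff (by positivity : ((q+4)/(q+2) + 1) ≠ 0) (ne_of_gt h3)]
      field_simp
      ring
    linarith [e2 ▸ this]
  have hL2 : (2 / (q + 3)) ^ 2 ≤ L ^ 2 := by
    apply pow_le_pow_left₀ (by positivity) hLB
  -- polynomial inequality
  have hpoly : q * ((q + 2) / 4 - 1 / (q + 2)) ≤
      q ^ 2 * (q + 2) / ((q + 1) * (q + 4)) + q ^ 2 * (2 / (q + 3)) ^ 2 / 2 := by
    rw [← sub_nonneg]
    have hkey : q ^ 2 * (q + 2) / ((q + 1) * (q + 4)) + q ^ 2 * (2 / (q + 3)) ^ 2 / 2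
        - q * ((q + 2) / 4 - 1 / (q + 2))
        = q ^ 2 * (64 + 40*q - 37*q^2 - 39*q^3 - 11*q^4 - q^5)
          / (4 * (q + 1) * (q + 4) * (q + 3) ^ 2 * (q + 2)) := by
      field_simp
      ring
    rw [hkey]
    have hnum : 0 ≤ 64 + 40*q - 37*q^2 - 39*q^3 - 11*q^4 - q^5 := by
      nlinarith [sq_nonneg q, sq_nonneg (1 - q), mul_nonneg hq0 (sub_nonneg.mpr hq1),
        sq_nonneg (q*(1-q)), mul_nonneg (mul_nonneg hq0 hq0) hq0]
    positivity
  -- combine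
  have hmain : q * Real.log ((q + 2) / 2) ≤
      q ^ 2 * (q + 2) / ((q + 1) * (q + 4)) + q ^ 2 * L ^ 2 / 2 := by
    calc q * Real.log ((q + 2) / 2) ≤ q * ((q + 2) / 4 - 1 / (q + 2)) :=
          mul_le_mul_of_nonneg_left hUB hq0
      _ ≤ q ^ 2 * (q + 2) / ((q + 1) * (q + 4)) + q ^ 2 * (2 / (q + 3)) ^ 2 / 2 := hpoly
      _ ≤ q ^ 2 * (q + 2) / ((q + 1) * (q + 4)) + q ^ 2 * L ^ 2 / 2 := by
          gcongr
  calc 1 - q ^ 2 * (q + 2) / ((q + 1) * (q + 4)) - q * -Real.log ((q + 4) / 2)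
      = 1 + q * L + (q * (Real.log ((q+2)/2)) - q ^ 2 * (q + 2) / ((q + 1) * (q + 4))) := by
        rw [hsplit]; ring
    _ ≤ 1 + q * L + (q * L) ^ 2 / 2 := by
        have : q * Real.log ((q + 2) / 2) - q ^ 2 * (q + 2) / ((q + 1) * (q + 4))
            ≤ q ^ 2 * L ^ 2 / 2 := by linarith
        nlinarith [this]
    _ ≤ Real.exp (q * L) := hexp
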